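/- For any two distributions F and G, the plus (resp. minus) dispersion component of the p-Wasserstein decomposition is strictly positive if and only if the corresponding dispersion component of the AVM decomposition is strictly positive, and this is also equivalent to strict positivity of the corresponding dispersion component of the Cramér distance decomposition. -/

import Mathlib

open MeasureTheory
open scoped ENNReal

/-- Signed `p`-th power `z^{[p]} = sgn(z)·|z|^p`. -/
noncomputable def sgnPow (p : ℕ) (z : ℝ) : ℝ := Real.sign z * |z| ^ p

/-- `Disp₊^{WD_p}` component, as a lower Lebesgue integral. -/
noncomputable def wdDispPlusL (p : ℕ) (qF qG : ℝ → ℝ) : ℝ≥0∞ :=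
  (1 / 2 : ℝ≥0∞) * ∫⁻ α in Set.Ioo (0:ℝ) 1,
    ENNReal.ofReal (max (sgnPow p (qF ((1 + α) / 2) - qG ((1 + α) / 2)) -
                         sgnPow p (qF ((1 - α) / 2) - qG ((1 - α) / 2))) 0)

/-- `Disp₊^{CD}` component, as a lower Lebesgue integral. -/
noncomputable def cdDispPlusL (qF qG : ℝ → ℝ) : ℝ≥0∞ :=
  (1 / 2 : ℝ≥0∞) * ∫⁻ β in Set.Ioo (0:ℝ) 1, ∫⁻ α in Set.Ioo (0:ℝ) β,
    ENNReal.ofReal (max ((qF ((1 + α) / 2) - qG ((1 + β) / 2)) -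
                         (qF ((1 - α) / 2) - qG ((1 - β) / 2))) 0)

open Set Filter
open scoped Topology

lemma sgnPow_nonneg_eq (p : ℕ) (hp : 1 ≤ p) {z : ℝ} (hz : 0 ≤ z) : sgnPow p z = z ^ p := by
  rcases eq_or_lt_of_le hz with h | h
  · simp [sgnPow, ← h, zero_pow (by omega : p ≠ 0)]
  · simp [sgnPow, Real.sign_of_pos h, abs_of_pos h]

lemma sgnPow_neg_eq (p : ℕ) {z : ℝ} (hz : z < 0) : sgnPow p z = -((-z) ^ p) := by
  simp [sgnPow, Real.sign_of_neg hz, abs_of_neg hz]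

lemma sgnPow_strictMono (p : ℕ) (hp : 1 ≤ p) : StrictMono (sgnPow p) := by
  intro z w hzw
  rcases le_or_gt 0 z with hz | hz
  · rw [sgnPow_nonneg_eq p hp hz, sgnPow_nonneg_eq p hp (hz.trans hzw.le)]
    exact pow_lt_pow_left₀ hzw hz (by omega)
  · rcases le_or_gt 0 w with hw | hw
    · rw [sgnPow_neg_eq p hz, sgnPow_nonneg_eq p hp hw]
      have h1 : 0 < (-z) ^ p := pow_pos (by linarith) p
      have h2 : 0 ≤ w ^ p := pow_nonneg hw p
      linarith
    · rw [sgnPow_neg_eq p hz, sgnPow_neg_eq p hw]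
      have : (-w) ^ p < (-z) ^ p := pow_lt_pow_left₀ (by linarith) (by linarith) (by omega)
      linarith

lemma monoPlus {qF : ℝ → ℝ} (hF : MonotoneOn qF (Set.Ioo 0 1)) :
    MonotoneOn (fun α : ℝ => qF ((1 + α) / 2)) (Set.Ioo 0 1) := by
  intro a ha b hb hab
  exact hF ⟨by linarith [ha.1], by linarith [ha.2]⟩ ⟨by linarith [hb.1], by linarith [hb.2]⟩
    (by linarith)

lemma antiMinus {qF : ℝ → ℝ} (hF : MonotoneOn qF (Set.Ioo 0 1)) :
    AntitoneOn (fun α : ℝ => qF ((1 - α) / 2)) (Set.Ioo 0 1) := by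
  intro a ha b hb hab
  exact hF ⟨by linarith [hb.1, hb.2], by linarith [hb.1, hb.2]⟩
    ⟨by linarith [ha.1, ha.2], by linarith [ha.1, ha.2]⟩ (by linarith)

lemma monoA {qF : ℝ → ℝ} (hF : MonotoneOn qF (Set.Ioo 0 1)) :
    MonotoneOn (fun α : ℝ => qF ((1 + α) / 2) - qF ((1 - α) / 2)) (Set.Ioo 0 1) := by
  intro a ha b hb hab
  have h1 := monoPlus hF ha hb hab
  have h2 := antiMinus hF ha hb hab
  simp only at h1 h2 ⊢
  linarith

lemma countable_discont {f : ℝ → ℝ} (hf : MonotoneOn f (Set.Ioo 0 1)) :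
    Set.Countable {t : ℝ | t ∈ Set.Ioo (0:ℝ) 1 ∧ ¬ContinuousAt f t} := by
  have hsub : {t : ℝ | t ∈ Set.Ioo (0:ℝ) 1 ∧ ¬ContinuousAt f t} ⊆
      ⋃ n : ℕ, {t : ℝ | t ∈ Set.Ioo (1/((n:ℝ)+3)) (1 - 1/((n:ℝ)+3)) ∧ ¬ContinuousAt f t} := by
    rintro t ⟨⟨ht0, ht1⟩, hc⟩
    have hmin : 0 < min t (1 - t) := lt_min ht0 (by linarith)
    obtain ⟨n, hn⟩ := exists_nat_gt (1 / min t (1 - t))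
    have hn3 : 1 / min t (1 - t) < (n:ℝ) + 3 := by linarith
    have key : 1/((n:ℝ)+3) < min t (1 - t) := by
      rw [div_lt_iff₀ (by positivity)]
      rw [div_lt_iff₀ hmin] at hn3
      linarith
    refine Set.mem_iUnion.2 ⟨n, ⟨⟨?_, ?_⟩, hc⟩⟩
    · exact key.trans_le (min_le_left _ _)
    · have := key.trans_le (min_le_right _ _); linarith
  refine Set.Countable.mono hsub (Set.countable_iUnion fun n => ?_)
  set a : ℝ := 1/((n:ℝ)+3) with ha
  set b : ℝ := 1 - 1/((n:ℝ)+3) with hb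
  have ha0 : 0 < a := by positivity
  have hab : a < b := by
    have h3 : (3:ℝ) ≤ (n:ℝ) + 3 := by linarith [Nat.cast_nonneg (α:=ℝ) n]
    have : a ≤ 1/3 := by
      rw [ha]
      apply div_le_div_of_nonneg_left (by norm_num) (by norm_num) h3
    simp only [hb]; linarith
  have hb1 : b < 1 := by simp only [hb]; linarith [ha0]
  set g : ℝ → ℝ := fun t => f (min (max t a) b) with hg
  have hclamp : ∀ t : ℝ, min (max t a) b ∈ Set.Ioo (0:ℝ) 1 := by
    intro t
    constructor
    · have : a ≤ min (max t a) b := le_min (le_max_right _ _) hab.le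
      linarith
    · exact lt_of_le_of_lt (min_le_right _ _) hb1
  have hgmono : Monotone g := by
    intro x y hxy
    exact hf (hclamp x) (hclamp y) (min_le_min (max_le_max hxy le_rfl) le_rfl)
  refine Set.Countable.mono ?_ hgmono.countable_not_continuousAt
  rintro t ⟨⟨hta, htb⟩, hc⟩
  intro hgc
  apply hc
  have heq : g =ᶠ[𝓝 t] f := by
    filter_upwards [Ioo_mem_nhds hta htb] with s hs
    simp only [hg, max_eq_left hs.1.le, min_eq_left hs.2.le]
  exact hgc.congr heq

lemma wd_pos_iff (p : ℕ) (hp : 1 ≤ p) (qF qG : ℝ → ℝ)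
    (hF : MonotoneOn qF (Set.Ioo 0 1)) (hG : MonotoneOn qG (Set.Ioo 0 1)) :
    (0 < wdDispPlusL p qF qG ↔
      ¬ ∀ᵐ α ∂(volume.restrict (Set.Ioo (0:ℝ) 1)),
        qF ((1 + α) / 2) - qF ((1 - α) / 2) ≤ qG ((1 + α) / 2) - qG ((1 - α) / 2)) := by
  set μ := volume.restrict (Set.Ioo (0:ℝ) 1) with hμ
  set f : ℝ → ℝ≥0∞ := fun α =>
    ENNReal.ofReal (max (sgnPow p (qF ((1 + α) / 2) - qG ((1 + α) / 2)) -
                         sgnPow p (qF ((1 - α) / 2) - qG ((1 - α) / 2))) 0) with hf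
  have hmF1 : AEMeasurable (fun α : ℝ => qF ((1 + α) / 2)) μ :=
    aemeasurable_restrict_of_monotoneOn measurableSet_Ioo (monoPlus hF)
  have hmF2 : AEMeasurable (fun α : ℝ => qF ((1 - α) / 2)) μ :=
    aemeasurable_restrict_of_antitoneOn measurableSet_Ioo (antiMinus hF)
  have hmG1 : AEMeasurable (fun α : ℝ => qG ((1 + α) / 2)) μ :=
    aemeasurable_restrict_of_monotoneOn measurableSet_Ioo (monoPlus hG)
  have hmG2 : AEMeasurable (fun α : ℝ => qG ((1 - α) / 2)) μ :=
    aemeasurable_restrict_of_antitoneOn measurableSet_Ioo (antiMinus hG)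
  have hsgn : Measurable (sgnPow p) := (sgnPow_strictMono p hp).monotone.measurable
  have hmeas : AEMeasurable f μ := by
    apply ENNReal.measurable_ofReal.comp_aemeasurable
    exact (((hsgn.comp_aemeasurable (hmF1.sub hmG1)).sub
      (hsgn.comp_aemeasurable (hmF2.sub hmG2))).max aemeasurable_const)
  have key : ∀ α : ℝ, (f α = 0 ↔
      qF ((1 + α) / 2) - qF ((1 - α) / 2) ≤ qG ((1 + α) / 2) - qG ((1 - α) / 2)) := by
    intro α
    rw [hf]
    simp only [ENNReal.ofReal_eq_zero, max_le_iff, le_refl, and_true, sub_nonpos,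
      (sgnPow_strictMono p hp).le_iff_le]
    constructor <;> intro h <;> linarith
  have hzero : wdDispPlusL p qF qG = 0 ↔
      ∀ᵐ α ∂μ, qF ((1 + α) / 2) - qF ((1 - α) / 2) ≤ qG ((1 + α) / 2) - qG ((1 - α) / 2) := by
    rw [wdDispPlusL, mul_eq_zero]
    have h2 : (1/2 : ℝ≥0∞) ≠ 0 := by norm_num
    simp only [h2, false_or]
    rw [show (∫⁻ α in Set.Ioo (0:ℝ) 1,
      ENNReal.ofReal (max (sgnPow p (qF ((1 + α) / 2) - qG ((1 + α) / 2)) -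
                         sgnPow p (qF ((1 - α) / 2) - qG ((1 - α) / 2))) 0)) = ∫⁻ α, f α ∂μ from rfl]
    rw [lintegral_eq_zero_iff' hmeas]
    constructor
    · intro h
      filter_upwards [h] with α hα
      exact (key α).1 hα
    · intro h
      filter_upwards [h] with α hα
      exact (key α).2 hα
  rw [pos_iff_ne_zero]
  exact not_congr hzero

lemma cd_pos_iff (qF qG : ℝ → ℝ)
    (hF : MonotoneOn qF (Set.Ioo 0 1)) (hG : MonotoneOn qG (Set.Ioo 0 1))
    (hGlc : ∀ τ ∈ Set.Ioo (0:ℝ) 1,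
      Filter.Tendsto qG (nhdsWithin τ (Set.Iio τ)) (nhds (qG τ))) :
    (0 < cdDispPlusL qF qG ↔
      ¬ ∀ᵐ α ∂(volume.restrict (Set.Ioo (0:ℝ) 1)),
        qF ((1 + α) / 2) - qF ((1 - α) / 2) ≤ qG ((1 + α) / 2) - qG ((1 - α) / 2)) := by
  constructor
  · -- if a.e. A ≤ B then cd = 0
    intro hpos hae
    have hg : ∀ᵐ β ∂(volume.restrict (Set.Ioo (0:ℝ) 1)),
        (∫⁻ α in Set.Ioo (0:ℝ) β,
          ENNReal.ofReal (max ((qF ((1 + α) / 2) - qG ((1 + β) / 2)) -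
                         (qF ((1 - α) / 2) - qG ((1 - β) / 2))) 0)) = 0 := by
      filter_upwards [hae, self_mem_ae_restrict measurableSet_Ioo] with β hβ hβmem
      have hzero : ∀ α ∈ Set.Ioo (0:ℝ) β,
          ENNReal.ofReal (max ((qF ((1 + α) / 2) - qG ((1 + β) / 2)) -
                         (qF ((1 - α) / 2) - qG ((1 - β) / 2))) 0) = 0 := by
        intro α hα
        have hαmem : α ∈ Set.Ioo (0:ℝ) 1 := ⟨hα.1, hα.2.trans hβmem.2⟩
        have hAm := monoA hF hαmem hβmem hα.2.le

        rw [ENNReal.ofReal_eq_zero]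
        simp only [max_le_iff, le_refl, and_true]
        linarith
      calc (∫⁻ α in Set.Ioo (0:ℝ) β,
          ENNReal.ofReal (max ((qF ((1 + α) / 2) - qG ((1 + β) / 2)) -
                         (qF ((1 - α) / 2) - qG ((1 - β) / 2))) 0))
          = ∫⁻ _ in Set.Ioo (0:ℝ) β, 0 :=
            setLIntegral_congr_fun measurableSet_Ioo hzero
        _ = 0 := by simp
    have : cdDispPlusL qF qG = 0 := by
      rw [cdDispPlusL, lintegral_congr_ae hg]
      simp
    rw [this] at hpos
    exact lt_irrefl 0 hpos
  · intro hae
    rw [ae_iff] at hae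
    simp only [not_le] at hae
    rw [Measure.restrict_apply' measurableSet_Ioo] at hae
    set S : Set ℝ := {α | qG ((1 + α) / 2) - qG ((1 - α) / 2) <
        qF ((1 + α) / 2) - qF ((1 - α) / 2)} with hS
    set N : Set ℝ := (fun β : ℝ => (1 + β) / 2) ⁻¹'
        {t : ℝ | t ∈ Set.Ioo (0:ℝ) 1 ∧ ¬ContinuousAt qG t} with hN
    have hNc : N.Countable :=
      (countable_discont hG).preimage (fun a b h => by simpa using (by linarith [show (1 + a) / 2 = (1 + b) / 2 from h] : a = b))
    have hN0 : volume N = 0 := hNc.measure_zero _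
    have h1 : volume ((S ∩ Set.Ioo 0 1) \ N) ≠ 0 := by
      rw [measure_diff_null hN0]; exact hae
    obtain ⟨β₀, ⟨hβS, hβmem⟩, hβN⟩ := nonempty_of_measure_ne_zero h1
    have hcontG : ContinuousAt qG ((1 + β₀) / 2) := by
      by_contra h
      exact hβN ⟨⟨by linarith [hβmem.1], by linarith [hβmem.2]⟩, h⟩
    have hβS' : qG ((1 + β₀) / 2) - qG ((1 - β₀) / 2) <
        qF ((1 + β₀) / 2) - qF ((1 - β₀) / 2) := hβS
    set ε : ℝ := ((qF ((1 + β₀) / 2) - qF ((1 - β₀) / 2)) -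
        (qG ((1 + β₀) / 2) - qG ((1 - β₀) / 2))) / 2 with hε
    have hεpos : 0 < ε := by rw [hε]; linarith
    set c : ℝ := qG ((1 + β₀) / 2) - qG ((1 - β₀) / 2) + ε with hc
    -- right-continuity of B at β₀
    have t1 : Tendsto (fun β : ℝ => qG ((1 + β) / 2)) (𝓝[>] β₀)
        (𝓝 (qG ((1 + β₀) / 2))) := by
      apply hcontG.tendsto.comp
      exact (((continuous_const.add continuous_id).div_const 2).tendsto β₀).mono_left
        nhdsWithin_le_nhds
    have t2 : Tendsto (fun β : ℝ => qG ((1 - β) / 2)) (𝓝[>] β₀)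
        (𝓝 (qG ((1 - β₀) / 2))) := by
      apply (hGlc ((1 - β₀) / 2) ⟨by linarith [hβmem.2], by linarith [hβmem.1]⟩).comp
      rw [tendsto_nhdsWithin_iff]
      constructor
      · exact (((continuous_const.sub continuous_id).div_const 2).tendsto β₀).mono_left
          nhdsWithin_le_nhds
      · filter_upwards [self_mem_nhdsWithin] with β (hβ : β ∈ Set.Ioi β₀)
        have : β₀ < β := hβ
        show (1 - β) / 2 ∈ Set.Iio ((1 - β₀) / 2)
        simp only [Set.mem_Iio]; linarith
    have hB : Tendsto (fun β : ℝ => qG ((1 + β) / 2) - qG ((1 - β) / 2)) (𝓝[>] β₀)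
        (𝓝 (qG ((1 + β₀) / 2) - qG ((1 - β₀) / 2))) := t1.sub t2
    have hev : ∀ᶠ β in 𝓝[>] β₀,
        qG ((1 + β) / 2) - qG ((1 - β) / 2) < c := hB.eventually_lt_const (by rw [hc]; linarith)
    have hev2 : ∀ᶠ β in 𝓝[>] β₀, β < 1 :=
      (tendsto_id.mono_left nhdsWithin_le_nhds).eventually_lt_const hβmem.2
    obtain ⟨u, hu, hsub⟩ := mem_nhdsGT_iff_exists_Ioo_subset.1 (hev.and hev2)
    set u₁ : ℝ := min u 1 with hu₁
    have hβu : β₀ < u₁ := lt_min hu hβmem.2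
    set m : ℝ := (β₀ + u₁) / 2 with hm
    have hm1 : β₀ < m := by rw [hm]; linarith
    have hm2 : m < u₁ := by rw [hm]; linarith
    have hu₁1 : u₁ ≤ 1 := min_le_right _ _
    set K : ℝ≥0∞ := ENNReal.ofReal ε * volume (Set.Ioo β₀ m) with hK
    have hinner : ∀ β ∈ Set.Ioo m u₁, K ≤ ∫⁻ α in Set.Ioo (0:ℝ) β,
        ENNReal.ofReal (max ((qF ((1 + α) / 2) - qG ((1 + β) / 2)) -
                         (qF ((1 - α) / 2) - qG ((1 - β) / 2))) 0) := by
      intro β hβ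
      have hβIoo : β ∈ Set.Ioo β₀ u := ⟨hm1.trans hβ.1, lt_of_lt_of_le hβ.2 (min_le_left _ _)⟩
      have hBβ := hsub hβIoo
      calc K = ∫⁻ _ in Set.Ioo β₀ m, ENNReal.ofReal ε := by
              rw [setLIntegral_const]
            _ ≤ ∫⁻ α in Set.Ioo β₀ m,
                ENNReal.ofReal (max ((qF ((1 + α) / 2) - qG ((1 + β) / 2)) -
                         (qF ((1 - α) / 2) - qG ((1 - β) / 2))) 0) := by
              apply setLIntegral_mono' measurableSet_Ioo
              intro α hα
              have hαmem : α ∈ Set.Ioo (0:ℝ) 1 :=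
                ⟨hβmem.1.trans hα.1, by linarith [hα.2, hm2, hu₁1]⟩
              have hA := monoA hF hβmem hαmem hα.1.le

              apply ENNReal.ofReal_le_ofReal
              apply le_max_of_le_left
              linarith [hBβ.1]
            _ ≤ _ := by
              apply lintegral_mono_set
              intro x hx
              exact ⟨hβmem.1.trans hx.1, hx.2.trans hβ.1⟩
    have houter : K * volume (Set.Ioo m u₁) ≤ ∫⁻ β in Set.Ioo (0:ℝ) 1,
        ∫⁻ α in Set.Ioo (0:ℝ) β,
          ENNReal.ofReal (max ((qF ((1 + α) / 2) - qG ((1 + β) / 2)) -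
                         (qF ((1 - α) / 2) - qG ((1 - β) / 2))) 0) := by
      calc K * volume (Set.Ioo m u₁) = ∫⁻ _ in Set.Ioo m u₁, K := (setLIntegral_const _ _).symm
        _ ≤ ∫⁻ β in Set.Ioo m u₁, ∫⁻ α in Set.Ioo (0:ℝ) β,
            ENNReal.ofReal (max ((qF ((1 + α) / 2) - qG ((1 + β) / 2)) -
                         (qF ((1 - α) / 2) - qG ((1 - β) / 2))) 0) :=
          setLIntegral_mono' measurableSet_Ioo hinner
        _ ≤ _ := by
          apply lintegral_mono_set
          intro x hx
          exact ⟨hβmem.1.trans (hm1.trans hx.1), lt_of_lt_of_le hx.2 hu₁1⟩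
    have hpos : 0 < K * volume (Set.Ioo m u₁) := by
      apply ENNReal.mul_pos
      · rw [hK]
        apply (ENNReal.mul_pos _ _).ne'
        · exact (ENNReal.ofReal_pos.2 hεpos).ne'
        · rw [Real.volume_Ioo]
          exact (ENNReal.ofReal_pos.2 (by linarith)).ne'
      · rw [Real.volume_Ioo]
        exact (ENNReal.ofReal_pos.2 (by linarith)).ne'
    calc (0:ℝ≥0∞) < (1/2 : ℝ≥0∞) * (K * volume (Set.Ioo m u₁)) :=
          ENNReal.mul_pos (by norm_num) hpos.ne'
      _ ≤ cdDispPlusL qF qG := by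
          rw [cdDispPlusL]
          exact mul_le_mul_right houter _


/-- Positivity of the dispersion components agrees across `WD_p`
(`p = 1` giving the AVM) and the Cramér distance, both for the plus
components and (by exchanging `F` and `G`) the minus components. -/
theorem disp_positivity_agreement (p : ℕ) (hp : 1 ≤ p) (qF qG : ℝ → ℝ)
    (hF : MonotoneOn qF (Set.Ioo 0 1)) (hG : MonotoneOn qG (Set.Ioo 0 1))
    (hFlc : ∀ τ ∈ Set.Ioo (0:ℝ) 1,
      Filter.Tendsto qF (nhdsWithin τ (Set.Iio τ)) (nhds (qF τ)))
    (hGlc : ∀ τ ∈ Set.Ioo (0:ℝ) 1,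
      Filter.Tendsto qG (nhdsWithin τ (Set.Iio τ)) (nhds (qG τ))) :
    ((0 < wdDispPlusL p qF qG ↔ 0 < wdDispPlusL 1 qF qG) ∧
      (0 < wdDispPlusL 1 qF qG ↔ 0 < cdDispPlusL qF qG)) ∧
    ((0 < wdDispPlusL p qG qF ↔ 0 < wdDispPlusL 1 qG qF) ∧
      (0 < wdDispPlusL 1 qG qF ↔ 0 < cdDispPlusL qG qF)) := by
  have W := fun (p' : ℕ) (hp' : 1 ≤ p') => wd_pos_iff p' hp' qF qG hF hG
  have W' := fun (p' : ℕ) (hp' : 1 ≤ p') => wd_pos_iff p' hp' qG qF hG hF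
  have C := cd_pos_iff qF qG hF hG hGlc
  have C' := cd_pos_iff qG qF hG hF hFlc
  exact ⟨⟨(W p hp).trans (W 1 le_rfl).symm, (W 1 le_rfl).trans C.symm⟩,
         ⟨(W' p hp).trans (W' 1 le_rfl).symm, (W' 1 le_rfl).trans C'.symm⟩⟩
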